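/- Under the assumptions of the previous setting (KKT plus second-order necessary conditions for the squared-slack problem min f(x) s.t. c(x) = v⊙v at (x,v,s)), the pair (x,s) satisfies the weak second-order necessary conditions for min f(x) s.t. c(x) ≥ 0: in addition to the KKT conditions, wᵀ∇²ₓₓL(x,s)w ≥ 0 for all w with ∇c_i(x)ᵀw = 0 for every index i with c_i(x) = 0. -/

import Mathlib

theorem stmt11 {n m : ℕ} (f : (Fin n → ℝ) → ℝ) (c : (Fin n → ℝ) → Fin m → ℝ)
    (hf : ContDiff ℝ 2 f) (hc : ContDiff ℝ 2 c)
    (x : Fin n → ℝ) (v s : Fin m → ℝ)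
    (L : (Fin n → ℝ) → ℝ) (hL : ∀ y, L y = f y - ∑ i, s i * c y i)
    (hgrad : fderiv ℝ f x = ∑ i, s i • fderiv ℝ (fun y => c y i) x)
    (hsv : ∀ i, s i * v i = 0)
    (hcv : ∀ i, c x i = v i * v i)
    (h2 : ∀ (w : Fin n → ℝ) (z : Fin m → ℝ),
      (∀ i, fderiv ℝ (fun y => c y i) x w = 2 * v i * z i) →
      0 ≤ fderiv ℝ (fun y => fderiv ℝ L y w) x w + 2 * ∑ i, s i * (z i) ^ 2) :
    ∀ w : Fin n → ℝ,
      (∀ i, c x i = 0 → fderiv ℝ (fun y => c y i) x w = 0) →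
      0 ≤ fderiv ℝ (fun y => fderiv ℝ L y w) x w := by
  intro w hw
  set z : Fin m → ℝ := fun i => if v i = 0 then 0 else fderiv ℝ (fun y => c y i) x w / (2 * v i)
  have hz : ∀ i, fderiv ℝ (fun y => c y i) x w = 2 * v i * z i := by
    intro i
    by_cases h : v i = 0
    · have h0 := hw i (by rw [hcv i, h]; ring)
      simp [z, h, h0]
    · simp only [z, h, ↓reduceIte]
      field_simp
  have hsz : ∀ i, s i * (z i) ^ 2 = 0 := by
    intro i
    by_cases h : v i = 0
    · simp [z, h]
    · have : s i = 0 := by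
        have := hsv i
        rcases mul_eq_zero.mp this with h' | h'
        · exact h'
        · exact absurd h' h
      simp [this]
  have := h2 w z hz
  simpa [hsz] using this
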